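/- Let A, B, C, D, F, G, E be compatible matrices over ℂ (or H). If A X + Y B + C Z₁ D + F Z₂ G = E is solvable, then the rank of the block matrix with rows (E, A), (B, 0), (D, 0), (G, 0) equals rank of the stacked matrix [B; D; G] plus rank A. -/

import Mathlib

open Matrix LinearMap

/-- product of submodules is linearly equivalent to the product. -/
def Submodule.prodEquivProd {R M N : Type*} [CommRing R] [AddCommGroup M] [AddCommGroup N]
    [Module R M] [Module R N] (p : Submodule R M) (q : Submodule R N) :
    ↥(p.prod q) ≃ₗ[R] p × q where
  toFun x := (⟨x.1.1, x.2.1⟩, ⟨x.1.2, x.2.2⟩)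
  invFun y := ⟨(y.1.1, y.2.1), ⟨y.1.2, y.2.2⟩⟩
  map_add' _ _ := rfl
  map_smul' _ _ := rfl
  left_inv _ := rfl
  right_inv _ := rfl

lemma range_prodMap' {R M N M' N' : Type*} [CommRing R] [AddCommGroup M] [AddCommGroup N]
    [AddCommGroup M'] [AddCommGroup N'] [Module R M] [Module R N] [Module R M'] [Module R N']
    (f : M →ₗ[R] M') (g : N →ₗ[R] N') :
    LinearMap.range (f.prodMap g) = (LinearMap.range f).prod (LinearMap.range g) := by
  ext ⟨x, y⟩
  simp only [LinearMap.mem_range, Submodule.mem_prod, prodMap_apply, Prod.ext_iff]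
  constructor
  · rintro ⟨⟨a, b⟩, h1, h2⟩; exact ⟨⟨a, h1⟩, ⟨b, h2⟩⟩
  · rintro ⟨⟨a, h1⟩, ⟨b, h2⟩⟩; exact ⟨(a, b), h1, h2⟩

lemma rank_fromBlocks_diag {m n m' n' : Type*} [Fintype m] [Fintype n] [Fintype m'] [Fintype n']
    (A : Matrix m n ℂ) (K : Matrix m' n' ℂ) :
    (fromBlocks A 0 0 K).rank = A.rank + K.rank := by
  have h : (fromBlocks A 0 0 K).mulVecLin =
      (LinearEquiv.sumArrowLequivProdArrow m m' ℂ ℂ).symm.toLinearMap ∘ₗ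
        (A.mulVecLin.prodMap K.mulVecLin) ∘ₗ
        (LinearEquiv.sumArrowLequivProdArrow n n' ℂ ℂ).toLinearMap := by
    ext x i
    cases i <;>
      simp [Matrix.fromBlocks_mulVec, LinearEquiv.sumArrowLequivProdArrow, Sum.elim_inl,
        Sum.elim_inr, Equiv.sumArrowEquivProdArrow]
  rw [Matrix.rank, h, LinearMap.range_comp, LinearMap.range_comp_of_range_eq_top _
    (LinearMap.range_eq_top.mpr (LinearEquiv.sumArrowLequivProdArrow n n' ℂ ℂ).surjective),
    LinearEquiv.finrank_map_eq, range_prodMap']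
  rw [Matrix.rank, Matrix.rank, ← Module.finrank_prod]
  exact LinearEquiv.finrank_eq (Submodule.prodEquivProd _ _)

lemma rank_submatrix_id_equiv {m n n' : Type*} [Fintype n] [Fintype n']
    (M : Matrix m n ℂ) (e : n' ≃ n) :
    (M.submatrix _root_.id e).rank = M.rank := by
  have h2 : (M.submatrix _root_.id e).mulVecLin
      = M.mulVecLin ∘ₗ LinearMap.funLeft ℂ ℂ ⇑e.symm := by
    rw [Matrix.mulVecLin_submatrix]; ext x i; simp
  rw [Matrix.rank, Matrix.rank, h2, LinearMap.range_comp_of_range_eq_top]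
  rw [LinearMap.range_eq_top]
  exact (LinearEquiv.funCongrLeft ℂ ℂ e.symm).surjective


/-- If A X + Y B + C Z₁ D + F Z₂ G = E is solvable then
rank [E A; B 0; D 0; G 0] = rank [B; D; G] + rank A. -/
theorem stmt14 {mm nn p q r s t u : ℕ}
    (E : Matrix (Fin mm) (Fin nn) ℂ)
    (A : Matrix (Fin mm) (Fin p) ℂ) (B : Matrix (Fin q) (Fin nn) ℂ)
    (C : Matrix (Fin mm) (Fin r) ℂ) (D : Matrix (Fin s) (Fin nn) ℂ)
    (F : Matrix (Fin mm) (Fin t) ℂ) (G : Matrix (Fin u) (Fin nn) ℂ)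
    (X : Matrix (Fin p) (Fin nn) ℂ) (Y : Matrix (Fin mm) (Fin q) ℂ)
    (Z₁ : Matrix (Fin r) (Fin s) ℂ) (Z₂ : Matrix (Fin t) (Fin u) ℂ)
    (hsol : A * X + Y * B + C * Z₁ * D + F * Z₂ * G = E) :
    (Matrix.fromBlocks E A (Matrix.fromRows B (Matrix.fromRows D G)) 0).rank
      = (Matrix.fromRows B (Matrix.fromRows D G)).rank + A.rank := by
  set K := Matrix.fromRows B (Matrix.fromRows D G) with hK
  set W := Matrix.fromCols Y (Matrix.fromCols (C * Z₁) (F * Z₂)) with hW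
  have hWK : W * K = Y * B + C * Z₁ * D + F * Z₂ * G := by
    rw [hW, hK, Matrix.fromCols_mul_fromRows, Matrix.fromCols_mul_fromRows]
    abel
  have key : Matrix.fromBlocks E A K 0 =
      (Matrix.fromBlocks (1 : Matrix (Fin mm) (Fin mm) ℂ) W 0 1) * (Matrix.fromBlocks 0 A K 0) *
        (Matrix.fromBlocks (1 : Matrix (Fin nn) (Fin nn) ℂ) 0 X 1) := by
    rw [Matrix.fromBlocks_multiply, Matrix.fromBlocks_multiply]
    congr 1 <;> simp [hWK, ← hsol] <;> abel
  have hL : IsUnit (Matrix.fromBlocks (1 : Matrix (Fin mm) (Fin mm) ℂ) W 0 1).det := by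
    rw [Matrix.det_fromBlocks_zero₂₁]; simp
  have hR : IsUnit (Matrix.fromBlocks (1 : Matrix (Fin nn) (Fin nn) ℂ) 0 X 1).det := by
    rw [Matrix.det_fromBlocks_zero₁₂]; simp
  rw [key, Matrix.rank_mul_eq_left_of_isUnit_det _ _ hR,
    Matrix.rank_mul_eq_right_of_isUnit_det _ _ hL]
  have hswap : Matrix.fromBlocks (0 : Matrix (Fin mm) (Fin nn) ℂ) A K 0
      = (Matrix.fromBlocks A 0 0 K).submatrix _root_.id ⇑(Equiv.sumComm (Fin nn) (Fin p)) := by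
    ext i j
    cases i <;> cases j <;> rfl
  rw [hswap, rank_submatrix_id_equiv, rank_fromBlocks_diag, add_comm]
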